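/- Let Σ^{-1}M → W →e X^M →p M be a distinguished triangle in 𝖳 in which p : X^M → M is an 𝒳-precover and e : W → X^M is an 𝒳-preenvelope. Then for every object L of 𝖳, the map Hom_𝖳(W, Σ^{-1}L)/𝒳(W, Σ^{-1}L) → Hom_𝖳(M, L) induced by the connecting morphism of the triangle (via the identification Hom_𝖳(Σ^{-1}M, Σ^{-1}L) ≅ Hom_𝖳(M, L)) is well-defined and injective, and its image equals the kernel of the precomposition map Hom_𝖳(M, L) → Hom_𝖳(X^M, L), f ↦ f∘p. Equivalently, there is an exact sequence 0 → 𝖳_𝒳(W, Σ^{-1}L) → 𝖳(M, L) → 𝖳(X^M, L). -/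

import Mathlib

/-!
STATEMENT 9.  Let `k` be an algebraically closed field and `T` a `k`-linear triangulated
category with finite-dimensional Hom-spaces and split idempotents; let `𝒳` be a class of
objects closed under isomorphisms, finite direct sums and direct summands.  Let
`Σ⁻¹M → W →e X^M →p M` be a distinguished triangle (written in rotated form
`W →e X^M →p M →δ ΣW`) in which `p` is an `𝒳`-precover and `e` is an `𝒳`-preenvelope.
Then for every object `L`, the map `Hom(W, Σ⁻¹L)/𝒳(W, Σ⁻¹L) → Hom(M, L)` induced by the
connecting morphism is well-defined and injective, and its image is the kernel of
`Hom(M, L) → Hom(X^M, L)`, `f ↦ f ∘ p`.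
-/

open CategoryTheory CategoryTheory.Limits CategoryTheory.Pretriangulated

/-- A morphism factors through (some object of) the class `𝒳`. -/
def FactorsThroughClass {C : Type*} [Category C] (𝒳 : Set C) {A B : C} (f : A ⟶ B) : Prop :=
  ∃ (X : C) (g : A ⟶ X) (h : X ⟶ B), X ∈ 𝒳 ∧ g ≫ h = f

/-- `f : A ⟶ B` is an `𝒳`-monomorphism: every morphism from `A` to an object of `𝒳`
factors through `f`. -/
def XMono {C : Type*} [Category C] (𝒳 : Set C) {A B : C} (f : A ⟶ B) : Prop :=
  ∀ (X : C), X ∈ 𝒳 → ∀ (g : A ⟶ X), ∃ h : B ⟶ X, f ≫ h = g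

/-- `f : A ⟶ B` is an `𝒳`-epimorphism: every morphism from an object of `𝒳` to `B`
factors through `f`. -/
def XEpi {C : Type*} [Category C] (𝒳 : Set C) {A B : C} (f : A ⟶ B) : Prop :=
  ∀ (X : C), X ∈ 𝒳 → ∀ (g : X ⟶ B), ∃ h : X ⟶ A, h ≫ f = g

theorem connecting_map_exact_sequence
    (k : Type*) [Field k] [IsAlgClosed k]
    {C : Type*} [Category C] [Preadditive C] [Linear k C] [HasZeroObject C]
    [HasShift C ℤ] [∀ n : ℤ, (CategoryTheory.shiftFunctor C n).Additive]
    [Pretriangulated C] [HasBinaryBiproducts C]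
    [∀ A B : C, FiniteDimensional k (A ⟶ B)] [IsIdempotentComplete C]
    (𝒳 : Set C)
    (hiso : ∀ {A B : C}, (A ≅ B) → A ∈ 𝒳 → B ∈ 𝒳)
    (hsum : ∀ {A B : C}, A ∈ 𝒳 → B ∈ 𝒳 → (A ⊞ B) ∈ 𝒳)
    (hsummand : ∀ {A B : C} (i : A ⟶ B) (r : B ⟶ A), i ≫ r = 𝟙 A → B ∈ 𝒳 → A ∈ 𝒳)
    (M W XM : C) (e : W ⟶ XM) (p : XM ⟶ M) (δ : M ⟶ W⟦(1 : ℤ)⟧)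
    (hT : Triangle.mk e p δ ∈ distTriang C)
    (hXM : XM ∈ 𝒳) (hp : XEpi 𝒳 p) (he : XMono 𝒳 e) :
    ∀ L : C,
      (∀ φ φ' : W ⟶ L⟦(-1 : ℤ)⟧,
        δ ≫ φ⟦(1 : ℤ)⟧' ≫ (shiftNegShift L (1 : ℤ)).hom
          = δ ≫ φ'⟦(1 : ℤ)⟧' ≫ (shiftNegShift L (1 : ℤ)).hom
          ↔ FactorsThroughClass 𝒳 (φ - φ')) ∧
      (∀ f : M ⟶ L,
        (∃ φ : W ⟶ L⟦(-1 : ℤ)⟧,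
          δ ≫ φ⟦(1 : ℤ)⟧' ≫ (shiftNegShift L (1 : ℤ)).hom = f) ↔ p ≫ f = 0) := by
  intro L
  have hzero : ∀ ψ : W ⟶ L⟦(-1 : ℤ)⟧,
      (δ ≫ ψ⟦(1 : ℤ)⟧' ≫ (shiftNegShift L (1 : ℤ)).hom = 0 ↔ FactorsThroughClass 𝒳 ψ) := by
    intro ψ
    constructor
    · intro h0
      have h1 : δ ≫ ψ⟦(1 : ℤ)⟧' = 0 := by
        rw [← cancel_mono (shiftNegShift L (1 : ℤ)).hom, Category.assoc, zero_comp]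
        exact h0
      obtain ⟨g, hg⟩ := Triangle.yoneda_exact₃ _ (rot_of_distTriang _ hT)
        (ψ⟦(1 : ℤ)⟧') h1
      change (shiftFunctor C (1 : ℤ)).map ψ = (-(shiftFunctor C (1 : ℤ)).map e) ≫ g at hg
      set h : XM ⟶ L⟦(-1 : ℤ)⟧ := (shiftFunctor C (1 : ℤ)).preimage (-g)
      have hh : (e ≫ h)⟦(1 : ℤ)⟧' = ψ⟦(1 : ℤ)⟧' := by
        simp only [h, Functor.map_comp, hg]
        erw [Functor.map_preimage, Preadditive.neg_comp, Preadditive.comp_neg]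
      refine ⟨XM, e, h, hXM, (shiftFunctor C (1 : ℤ)).map_injective hh⟩
    · rintro ⟨X, g, h, hX, rfl⟩
      obtain ⟨h', hh'⟩ := he X hX g
      have h31 : δ ≫ e⟦(1 : ℤ)⟧' = 0 := comp_distTriang_mor_zero₃₁ _ hT
      have : δ ≫ (g ≫ h)⟦(1 : ℤ)⟧' = 0 := by
        rw [← hh', Functor.map_comp, Functor.map_comp, ← Category.assoc, ← Category.assoc,
          h31, zero_comp, zero_comp]
      rw [← Category.assoc, this, zero_comp]
  constructor
  · intro φ φ'
    rw [← sub_eq_zero, ← Preadditive.comp_sub, ← Preadditive.sub_comp, ← Functor.map_sub]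
    exact hzero (φ - φ')
  · intro f
    constructor
    · rintro ⟨φ, rfl⟩
      have h23 : p ≫ δ = 0 := comp_distTriang_mor_zero₂₃ _ hT
      rw [← Category.assoc, h23, zero_comp]
    · intro hf
      obtain ⟨g, hg⟩ := Triangle.yoneda_exact₃ _ hT f hf
      refine ⟨(shiftFunctor C (1 : ℤ)).preimage (g ≫ (shiftNegShift L (1 : ℤ)).inv), ?_⟩
      rw [Functor.map_preimage]
      erw [Category.assoc, Iso.inv_hom_id, Category.comp_id, hg]
      rfl
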